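/- Let X be a real m×n matrix and let 0 < r ≤ min(m,n) and λ ≥ 0. Consider minimizing F_λ(Z) := (1/2)‖X − Z‖_F² + λ‖Z‖_* over all m×n real matrices Z with rank(Z) ≤ r. A minimizer is given by Ẑ = U_r S_λ(D_r) V_rᵀ, where U_r D_r V_rᵀ is the rank-r truncated singular value decomposition of X (U_r and V_r have orthonormal columns, D_r = diag(σ₁,…,σ_r) contains the r largest singular values of X in decreasing order) and S_λ(D_r) = diag((σ₁−λ)₊,…,(σ_r−λ)₊). -/

import Mathlib

noncomputable section

open Matrix

/-- Squared Frobenius norm of a real matrix. -/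
def frobSq {m n : ℕ} (M : Matrix (Fin m) (Fin n) ℝ) : ℝ := ∑ i, ∑ j, (M i j) ^ 2

/-- Nuclear norm: sum of the singular values, i.e. of the square roots of the
eigenvalues of `Zᴴ * Z`. -/
def nuclearNorm {m n : ℕ} (Z : Matrix (Fin m) (Fin n) ℝ) : ℝ :=
  ∑ i, Real.sqrt ((Matrix.isHermitian_conjTranspose_mul_self Z).eigenvalues i)

/-- `U * diagonal σ * Vᵀ` is a (thin) singular value decomposition of `X`, with the
singular values `σ` listed in decreasing order. -/
def IsThinSVD {m n p : ℕ} (X : Matrix (Fin m) (Fin n) ℝ) (U : Matrix (Fin m) (Fin p) ℝ)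
    (σ : Fin p → ℝ) (V : Matrix (Fin n) (Fin p) ℝ) : Prop :=
  X = U * Matrix.diagonal σ * Vᵀ ∧ Uᵀ * U = 1 ∧ Vᵀ * V = 1 ∧
    (∀ i, 0 ≤ σ i) ∧ Antitone σ

namespace SoftSVD

lemma frobSq_eq_trace {a b : ℕ} (M : Matrix (Fin a) (Fin b) ℝ) :
    frobSq M = Matrix.trace (Mᵀ * M) := by
  unfold frobSq Matrix.trace
  simp only [Matrix.diag, Matrix.mul_apply, Matrix.transpose_apply, sq]
  exact Finset.sum_comm

lemma frobSq_nonneg {a b : ℕ} (M : Matrix (Fin a) (Fin b) ℝ) : 0 ≤ frobSq M :=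
  Finset.sum_nonneg fun _ _ => Finset.sum_nonneg fun _ _ => sq_nonneg _

lemma eq_zero_of_frobSq_eq_zero {a b : ℕ} {M : Matrix (Fin a) (Fin b) ℝ}
    (h : frobSq M = 0) : M = 0 := by
  ext i j
  have h1 : ∀ i ∈ Finset.univ, (0:ℝ) ≤ ∑ j, (M i j)^2 :=
    fun _ _ => Finset.sum_nonneg fun _ _ => sq_nonneg _
  have h2 := (Finset.sum_eq_zero_iff_of_nonneg h1).mp h i (Finset.mem_univ i)
  have h3 := (Finset.sum_eq_zero_iff_of_nonneg (fun k _ => sq_nonneg (M i k))).mp h2 j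
    (Finset.mem_univ j)
  have := pow_eq_zero_iff (n := 2) (by norm_num) |>.mp h3
  simpa using this

lemma trace_transpose_mul_comm {a b : ℕ} (A B : Matrix (Fin a) (Fin b) ℝ) :
    Matrix.trace (Aᵀ * B) = Matrix.trace (Bᵀ * A) := by
  rw [← Matrix.trace_transpose (Aᵀ * B), Matrix.transpose_mul, Matrix.transpose_transpose,
    Matrix.trace_mul_comm]

lemma frobSq_sub {a b : ℕ} (A B : Matrix (Fin a) (Fin b) ℝ) :
    frobSq (A - B) = frobSq A - 2 * Matrix.trace (Aᵀ * B) + frobSq B := by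
  rw [frobSq_eq_trace, frobSq_eq_trace, frobSq_eq_trace, Matrix.transpose_sub,
    Matrix.sub_mul, Matrix.mul_sub, Matrix.mul_sub, Matrix.trace_sub, Matrix.trace_sub,
    Matrix.trace_sub, trace_transpose_mul_comm B A]
  ring

lemma mul_cancel_assoc {a b k : ℕ} {P : Matrix (Fin a) (Fin b) ℝ} {Q : Matrix (Fin b) (Fin a) ℝ}
    (h : P * Q = 1) (B : Matrix (Fin a) (Fin k) ℝ) : P * (Q * B) = B := by
  rw [← Matrix.mul_assoc, h, Matrix.one_mul]

lemma diagonal_mul_assoc {a k : ℕ} (e f : Fin a → ℝ) (B : Matrix (Fin a) (Fin k) ℝ) :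
    Matrix.diagonal e * (Matrix.diagonal f * B) = Matrix.diagonal (fun i => e i * f i) * B := by
  rw [← Matrix.mul_assoc, Matrix.diagonal_mul_diagonal]

lemma trace_diagonal_mul {a : ℕ} (f : Fin a → ℝ) (B : Matrix (Fin a) (Fin a) ℝ) :
    Matrix.trace (Matrix.diagonal f * B) = ∑ i, f i * B i i := by
  unfold Matrix.trace
  simp [Matrix.diag, Matrix.diagonal_mul]

lemma trace_transpose_mul_eq_sum {a b : ℕ} (B C : Matrix (Fin a) (Fin b) ℝ) :
    Matrix.trace (Bᵀ * C) = ∑ i, ∑ k, B k i * C k i := by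
  unfold Matrix.trace
  simp [Matrix.diag, Matrix.mul_apply]

lemma frobSq_mul_eq_trace {a b : ℕ} (A : Matrix (Fin a) (Fin b) ℝ) {P : Matrix (Fin b) (Fin b) ℝ}
    (hs : Pᵀ = P) (hi : P * P = P) : frobSq (A * P) = Matrix.trace (Aᵀ * A * P) := by
  rw [frobSq_eq_trace, Matrix.transpose_mul, hs]
  rw [Matrix.trace_mul_cycle]
  rw [show A * P * P = A * P by rw [Matrix.mul_assoc, hi]]
  rw [Matrix.trace_mul_comm, ← Matrix.mul_assoc]

lemma frobSq_mul_proj_le {a b : ℕ} (A : Matrix (Fin a) (Fin b) ℝ) {P : Matrix (Fin b) (Fin b) ℝ}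
    (hs : Pᵀ = P) (hi : P * P = P) : frobSq (A * P) ≤ frobSq A := by
  have h1 : (1 - P)ᵀ = 1 - P := by rw [Matrix.transpose_sub, Matrix.transpose_one, hs]
  have h2 : (1 - P) * (1 - P) = 1 - P := by
    rw [Matrix.sub_mul, Matrix.one_mul, Matrix.mul_sub, hi, Matrix.mul_one]
    abel
  have e1 := frobSq_mul_eq_trace A hs hi
  have e2 := frobSq_mul_eq_trace A h1 h2
  have e4 : Matrix.trace (Aᵀ * A * (1 - P))
      = Matrix.trace (Aᵀ * A) - Matrix.trace (Aᵀ * A * P) := by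
    rw [Matrix.mul_sub, Matrix.mul_one, Matrix.trace_sub]
  have e5 : frobSq A = Matrix.trace (Aᵀ * A) := frobSq_eq_trace A
  have e6 := frobSq_nonneg (A * (1 - P))
  linarith [e2 ▸ e6]

lemma frobSq_mul_ortho_le {a p b : ℕ} {V : Matrix (Fin a) (Fin p) ℝ} (hV : Vᵀ * V = 1)
    (A : Matrix (Fin b) (Fin a) ℝ) : frobSq (A * V) ≤ frobSq A := by
  have hP : (V * Vᵀ)ᵀ = V * Vᵀ := by rw [Matrix.transpose_mul, Matrix.transpose_transpose]
  have hPi : (V * Vᵀ) * (V * Vᵀ) = V * Vᵀ := by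
    rw [Matrix.mul_assoc, mul_cancel_assoc hV]
  have key : frobSq (A * V) = frobSq (A * (V * Vᵀ)) := by
    have ht : Matrix.trace ((A*V)ᵀ*(A*V)) = Matrix.trace (Aᵀ*A*(V*Vᵀ)) := by
      rw [Matrix.transpose_mul, Matrix.trace_mul_comm,
        show A * V * (Vᵀ * Aᵀ) = (A * (V * Vᵀ)) * Aᵀ by simp only [Matrix.mul_assoc],
        Matrix.trace_mul_comm, ← Matrix.mul_assoc]
    rw [frobSq_eq_trace, ht, ← frobSq_mul_eq_trace A hP hPi]
  rw [key]
  exact frobSq_mul_proj_le A hP hPi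

lemma diag_proj_conj_nonneg {a k : ℕ} {P : Matrix (Fin a) (Fin a) ℝ} (hs : Pᵀ = P)
    (hi : P * P = P) (B : Matrix (Fin a) (Fin k) ℝ) (i : Fin k) : 0 ≤ (Bᵀ * P * B) i i := by
  have h : (P * B)ᵀ * (P * B) = Bᵀ * P * B := by
    rw [Matrix.transpose_mul, hs, Matrix.mul_assoc Bᵀ P (P*B), ← Matrix.mul_assoc P P B, hi,
      ← Matrix.mul_assoc]
  rw [← h, Matrix.mul_apply]
  exact Finset.sum_nonneg fun j _ => by
    simp only [Matrix.transpose_apply]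
    exact mul_self_nonneg _

lemma diag_quad {a p : ℕ} (f : Fin a → ℝ) (T : Matrix (Fin a) (Fin p) ℝ) (i : Fin p) :
    (Tᵀ * Matrix.diagonal f * T) i i = ∑ j, f j * (T j i)^2 := by
  rw [Matrix.mul_assoc, Matrix.mul_apply]
  congr 1; funext j
  simp only [Matrix.diagonal_mul, Matrix.transpose_apply, sq]
  ring


lemma sum_mul_le_sqrt_mul_sqrt {a : ℕ} (f g : Fin a → ℝ) :
    ∑ i, f i * g i ≤ Real.sqrt (∑ i, f i ^ 2) * Real.sqrt (∑ i, g i ^ 2) := by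
  have h := Finset.sum_mul_sq_le_sq_mul_sq Finset.univ f g
  calc ∑ i, f i * g i ≤ |∑ i, f i * g i| := le_abs_self _
    _ = Real.sqrt ((∑ i, f i * g i)^2) := (Real.sqrt_sq_eq_abs _).symm
    _ ≤ Real.sqrt ((∑ i, f i^2) * (∑ i, g i^2)) := Real.sqrt_le_sqrt h
    _ = _ := Real.sqrt_mul (Finset.sum_nonneg fun _ _ => sq_nonneg _) _

lemma conj_reduce {a : ℕ} {W : Matrix (Fin a) (Fin a) ℝ} (hW : Wᵀ * W = 1)
    (D : Matrix (Fin a) (Fin a) ℝ) : Wᵀ * (W * D * Wᵀ) * W = D := by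
  calc Wᵀ * (W * D * Wᵀ) * W = Wᵀ * (W * (D * (Wᵀ * W))) := by simp only [Matrix.mul_assoc]
    _ = D := by rw [hW, Matrix.mul_one, mul_cancel_assoc hW]

lemma spectral {a b : ℕ} (Z : Matrix (Fin a) (Fin b) ℝ) :
    ∃ W : Matrix (Fin b) (Fin b) ℝ, Wᵀ * W = 1 ∧ W * Wᵀ = 1 ∧
      Zᵀ * Z = W * Matrix.diagonal ((Matrix.isHermitian_conjTranspose_mul_self Z).eigenvalues) * Wᵀ := by
  have hA := Matrix.isHermitian_conjTranspose_mul_self Z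
  set W : Matrix (Fin b) (Fin b) ℝ := (hA.eigenvectorUnitary : Matrix (Fin b) (Fin b) ℝ) with hWdef
  have hmem := hA.eigenvectorUnitary.2
  have h1 : star W * W = 1 := hmem.1
  have h2 : W * star W = 1 := hmem.2
  have hstar : star W = Wᵀ := by
    rw [Matrix.star_eq_conjTranspose, Matrix.conjTranspose_eq_transpose_of_trivial]
  have hsp := hA.spectral_theorem
  have hct : Zᴴ = Zᵀ := Matrix.conjTranspose_eq_transpose_of_trivial Z
  refine ⟨W, by rw [← hstar]; exact h1, by rw [← hstar]; exact h2, ?_⟩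
  rw [← hct]
  convert hsp using 2
  rw [Unitary.conjStarAlgAut_apply, ← hstar]
  rfl


lemma gram_eq {m n p : ℕ} {U : Matrix (Fin m) (Fin p) ℝ} {V : Matrix (Fin n) (Fin p) ℝ}
    (hU : Uᵀ * U = 1) (e f : Fin p → ℝ) :
    (U * Matrix.diagonal e * Vᵀ)ᵀ * (U * Matrix.diagonal f * Vᵀ)
      = V * Matrix.diagonal (fun i => e i * f i) * Vᵀ := by
  simp only [Matrix.transpose_mul, Matrix.transpose_transpose, Matrix.diagonal_transpose,
    Matrix.mul_assoc]
  rw [mul_cancel_assoc hU, diagonal_mul_assoc]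

lemma trace_UDVt_mul {m n p : ℕ} {U : Matrix (Fin m) (Fin p) ℝ} {V : Matrix (Fin n) (Fin p) ℝ}
    (hU : Uᵀ * U = 1) (hV : Vᵀ * V = 1) (e f : Fin p → ℝ) :
    Matrix.trace ((U * Matrix.diagonal e * Vᵀ)ᵀ * (U * Matrix.diagonal f * Vᵀ))
      = ∑ i, e i * f i := by
  rw [gram_eq hU e f, Matrix.trace_mul_cycle, hV, Matrix.one_mul, Matrix.trace_diagonal]

lemma frobSq_UDVt {m n p : ℕ} {U : Matrix (Fin m) (Fin p) ℝ} {V : Matrix (Fin n) (Fin p) ℝ}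
    (hU : Uᵀ * U = 1) (hV : Vᵀ * V = 1) (e : Fin p → ℝ) :
    frobSq (U * Matrix.diagonal e * Vᵀ) = ∑ i, e i * e i := by
  rw [frobSq_eq_trace, trace_UDVt_mul hU hV e e]


lemma col_sq_sum {a k : ℕ} (T : Matrix (Fin a) (Fin k) ℝ) (i : Fin k) :
    (Tᵀ * T) i i = ∑ j, (T j i)^2 := by
  rw [Matrix.mul_apply]
  congr 1; funext j
  simp [Matrix.transpose_apply, sq]

lemma sandwich_mul {a : ℕ} {W : Matrix (Fin a) (Fin a) ℝ} (hW1 : Wᵀ * W = 1)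
    (e f : Fin a → ℝ) :
    (W * Matrix.diagonal e * Wᵀ) * (W * Matrix.diagonal f * Wᵀ)
      = W * Matrix.diagonal (fun i => e i * f i) * Wᵀ := by
  simp only [Matrix.mul_assoc]
  rw [mul_cancel_assoc hW1, diagonal_mul_assoc]

lemma trace_sandwich {a : ℕ} {W : Matrix (Fin a) (Fin a) ℝ} (hW1 : Wᵀ * W = 1)
    (e : Fin a → ℝ) :
    Matrix.trace (W * Matrix.diagonal e * Wᵀ) = ∑ i, e i := by
  rw [Matrix.trace_mul_cycle, hW1, Matrix.one_mul, Matrix.trace_diagonal]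

lemma sandwich_transpose {a : ℕ} (W : Matrix (Fin a) (Fin a) ℝ) (e : Fin a → ℝ) :
    (W * Matrix.diagonal e * Wᵀ)ᵀ = W * Matrix.diagonal e * Wᵀ := by
  rw [Matrix.transpose_mul, Matrix.transpose_mul, Matrix.transpose_transpose,
    Matrix.diagonal_transpose, Matrix.mul_assoc]

lemma conj_proj_eq {a k : ℕ} {P : Matrix (Fin a) (Fin a) ℝ} (hs : Pᵀ = P)
    (hi : P * P = P) (B : Matrix (Fin a) (Fin k) ℝ) :
    Bᵀ * P * B = (P * B)ᵀ * (P * B) := by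
  rw [Matrix.transpose_mul, hs, Matrix.mul_assoc Bᵀ P (P*B), ← Matrix.mul_assoc P P B, hi,
    ← Matrix.mul_assoc]

lemma compl_proj_transpose {a : ℕ} {P : Matrix (Fin a) (Fin a) ℝ} (hs : Pᵀ = P) :
    (1 - P)ᵀ = 1 - P := by rw [Matrix.transpose_sub, Matrix.transpose_one, hs]

lemma compl_proj_idem {a : ℕ} {P : Matrix (Fin a) (Fin a) ℝ} (hi : P * P = P) :
    (1 - P) * (1 - P) = 1 - P := by
  rw [Matrix.sub_mul, Matrix.one_mul, Matrix.mul_sub, hi, Matrix.mul_one]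
  abel

lemma dual_bound {m n p : ℕ} {U : Matrix (Fin m) (Fin p) ℝ} {V : Matrix (Fin n) (Fin p) ℝ}
    (hU : Uᵀ * U = 1) (hV : Vᵀ * V = 1) {c : Fin p → ℝ} {lam : ℝ} (hlam : 0 ≤ lam)
    (hc0 : ∀ i, 0 ≤ c i) (hcl : ∀ i, c i ≤ lam) (Z : Matrix (Fin m) (Fin n) ℝ) :
    Matrix.trace ((U * Matrix.diagonal c * Vᵀ)ᵀ * Z) ≤ lam * nuclearNorm Z := by
  obtain ⟨W, hW1, hW2, hWA⟩ := spectral Z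
  set μ := (Matrix.isHermitian_conjTranspose_mul_self Z).eigenvalues with hμ
  set Y := U * Matrix.diagonal c * Vᵀ with hY
  have step1 : Matrix.trace ((Y*W)ᵀ * (Z*W)) = Matrix.trace (Yᵀ * Z) := by
    rw [Matrix.transpose_mul, Matrix.trace_mul_comm, Matrix.mul_assoc,
      mul_cancel_assoc hW2, Matrix.trace_mul_comm]
  have hZcol : ∀ i, ∑ k, (Z*W) k i ^ 2 = μ i := by
    intro i
    have h : (Z*W)ᵀ*(Z*W) = Matrix.diagonal μ := by
      calc (Z*W)ᵀ*(Z*W) = Wᵀ*(Zᵀ*Z)*W := by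
            rw [Matrix.transpose_mul]; simp only [Matrix.mul_assoc]
        _ = Wᵀ*(W*Matrix.diagonal μ*Wᵀ)*W := by rw [hWA]
        _ = Matrix.diagonal μ := conj_reduce hW1 _
    rw [← col_sq_sum, h, Matrix.diagonal_apply_eq]
  have hYcol : ∀ i, ∑ k, (Y*W) k i ^ 2 ≤ lam^2 := by
    intro i
    have h : (Y*W)ᵀ*(Y*W) = (Vᵀ*W)ᵀ * Matrix.diagonal (fun j => c j * c j) * (Vᵀ*W) := by
      calc (Y*W)ᵀ*(Y*W) = Wᵀ*(Yᵀ*Y)*W := by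
            rw [Matrix.transpose_mul]; simp only [Matrix.mul_assoc]
        _ = Wᵀ*(V * Matrix.diagonal (fun j => c j * c j) * Vᵀ)*W := by
            rw [hY, gram_eq hU c c]
        _ = (Vᵀ*W)ᵀ * Matrix.diagonal (fun j => c j * c j) * (Vᵀ*W) := by
            rw [Matrix.transpose_mul, Matrix.transpose_transpose]
            simp only [Matrix.mul_assoc]
    have h2 : ∑ k, (Y*W) k i ^ 2 = ∑ j, (c j * c j) * ((Vᵀ*W) j i)^2 := by
      rw [← col_sq_sum, h, diag_quad]
    have h4 : ∑ j, ((Vᵀ*W) j i)^2 ≤ 1 := by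
      have e2 : (Vᵀ*W)ᵀ*(Vᵀ*W) = Wᵀ*(V*Vᵀ)*W := by
        rw [Matrix.transpose_mul, Matrix.transpose_transpose]; simp only [Matrix.mul_assoc]
      have hPs : (V*Vᵀ)ᵀ = V*Vᵀ := by rw [Matrix.transpose_mul, Matrix.transpose_transpose]
      have hPi : (V*Vᵀ)*(V*Vᵀ) = V*Vᵀ := by rw [Matrix.mul_assoc, mul_cancel_assoc hV]
      have e4 := diag_proj_conj_nonneg (compl_proj_transpose hPs) (compl_proj_idem hPi) W i
      have e5 : Wᵀ*(1 - V*Vᵀ)*W = Wᵀ*W - Wᵀ*(V*Vᵀ)*W := by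
        rw [Matrix.mul_sub, Matrix.mul_one, Matrix.sub_mul]
      rw [e5, hW1, Matrix.sub_apply, Matrix.one_apply_eq] at e4
      have e6 : ∑ j, ((Vᵀ*W) j i)^2 = (Wᵀ*(V*Vᵀ)*W) i i := by rw [← col_sq_sum, e2]
      rw [e6]; linarith
    rw [h2]
    calc ∑ j, (c j * c j) * ((Vᵀ*W) j i)^2 ≤ ∑ j, lam^2 * ((Vᵀ*W) j i)^2 := by
          apply Finset.sum_le_sum
          intro j _
          apply mul_le_mul_of_nonneg_right _ (sq_nonneg _)
          have := hc0 j; have := hcl j; nlinarith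
      _ = lam^2 * ∑ j, ((Vᵀ*W) j i)^2 := by rw [Finset.mul_sum]
      _ ≤ lam^2 * 1 := mul_le_mul_of_nonneg_left h4 (sq_nonneg lam)
      _ = lam^2 := mul_one _
  have hμ0 : ∀ i, 0 ≤ μ i := fun i => Matrix.eigenvalues_conjTranspose_mul_self_nonneg Z i
  rw [← step1, trace_transpose_mul_eq_sum]
  have hnuc : nuclearNorm Z = ∑ i, Real.sqrt (μ i) := rfl
  rw [hnuc, Finset.mul_sum]
  apply Finset.sum_le_sum
  intro i _
  calc ∑ k, (Y*W) k i * (Z*W) k i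
      ≤ Real.sqrt (∑ k, (Y*W) k i ^ 2) * Real.sqrt (∑ k, (Z*W) k i ^ 2) :=
        sum_mul_le_sqrt_mul_sqrt _ _
    _ ≤ lam * Real.sqrt (μ i) := by
        rw [hZcol i]
        apply mul_le_mul_of_nonneg_right _ (Real.sqrt_nonneg _)
        calc Real.sqrt (∑ k, (Y*W) k i ^ 2) ≤ Real.sqrt (lam^2) := Real.sqrt_le_sqrt (hYcol i)
          _ = lam := by rw [Real.sqrt_sq hlam]


lemma nuclearNorm_le_sum {m n p : ℕ} {U : Matrix (Fin m) (Fin p) ℝ} {V : Matrix (Fin n) (Fin p) ℝ}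
    (hU : Uᵀ * U = 1) (hV : Vᵀ * V = 1) {e : Fin p → ℝ} (he0 : ∀ i, 0 ≤ e i) :
    nuclearNorm (U * Matrix.diagonal e * Vᵀ) ≤ ∑ i, e i := by
  set Z0 := U * Matrix.diagonal e * Vᵀ with hZ0
  obtain ⟨W, hW1, hW2, hWA⟩ := spectral Z0
  set ν := (Matrix.isHermitian_conjTranspose_mul_self Z0).eigenvalues with hν
  have hν0 : ∀ i, 0 ≤ ν i := fun i => Matrix.eigenvalues_conjTranspose_mul_self_nonneg Z0 i
  set ι : Fin n → ℝ := fun i => if ν i = 0 then 0 else (Real.sqrt (ν i))⁻¹ with hι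
  set R := W * Matrix.diagonal ι * Wᵀ with hR
  have hRt : Rᵀ = R := by rw [hR, sandwich_transpose]
  set G := Z0 * R with hG
  have step1 : Matrix.trace (Gᵀ * Z0) = ∑ i, Real.sqrt (ν i) := by
    have h1 : Gᵀ * Z0 = R * (Z0ᵀ * Z0) := by
      rw [hG, Matrix.transpose_mul, hRt, Matrix.mul_assoc]
    rw [h1, hWA, hR, sandwich_mul hW1, trace_sandwich hW1]
    apply Finset.sum_congr rfl
    intro i _
    by_cases h : ν i = 0
    · simp [hι, h]
    · simp only [hι, if_neg h]
      have hne : Real.sqrt (ν i) ≠ 0 := by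
        rw [Real.sqrt_ne_zero']
        exact lt_of_le_of_ne (hν0 i) (Ne.symm h)
      rw [inv_mul_eq_div, div_eq_iff hne]
      exact (Real.mul_self_sqrt (hν0 i)).symm
  have hχ1 : ∀ i, ι i * (ν i * ι i) ≤ 1 := by
    intro i
    by_cases h : ν i = 0
    · simp [hι, h]
    · simp only [hι, if_neg h]
      have hpos : 0 < Real.sqrt (ν i) := by
        rw [Real.sqrt_pos]; exact lt_of_le_of_ne (hν0 i) (Ne.symm h)
      have hs : Real.sqrt (ν i) * Real.sqrt (ν i) = ν i := Real.mul_self_sqrt (hν0 i)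
      rw [show (Real.sqrt (ν i))⁻¹ * (ν i * (Real.sqrt (ν i))⁻¹)
        = ν i / (Real.sqrt (ν i) * Real.sqrt (ν i)) from by ring, hs, div_self h]
  have hGG : Gᵀ * G = W * Matrix.diagonal (fun i => ι i * (ν i * ι i)) * Wᵀ := by
    calc Gᵀ*G = R * (Z0ᵀ * Z0) * R := by
          rw [hG, Matrix.transpose_mul, hRt]; simp only [Matrix.mul_assoc]
      _ = R * ((W * Matrix.diagonal ν * Wᵀ) * R) := by rw [hWA, Matrix.mul_assoc]
      _ = (W * Matrix.diagonal ι * Wᵀ)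
            * ((W * Matrix.diagonal ν * Wᵀ) * (W * Matrix.diagonal ι * Wᵀ)) := by rw [hR]
      _ = (W * Matrix.diagonal ι * Wᵀ) * (W * Matrix.diagonal (fun i => ν i * ι i) * Wᵀ) := by
          rw [sandwich_mul hW1]
      _ = W * Matrix.diagonal (fun i => ι i * (ν i * ι i)) * Wᵀ := by rw [sandwich_mul hW1]
  have step2 : Matrix.trace (Gᵀ * Z0) = ∑ j, e j * (((G*V)ᵀ*U) j j) := by
    conv_lhs => rw [hZ0]
    rw [show Gᵀ*(U*Matrix.diagonal e*Vᵀ) = Gᵀ*U*(Matrix.diagonal e*Vᵀ) from by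
        simp only [Matrix.mul_assoc],
      Matrix.trace_mul_comm, Matrix.mul_assoc, trace_diagonal_mul]
    apply Finset.sum_congr rfl
    intro j _
    rw [show (G*V)ᵀ*U = Vᵀ*(Gᵀ*U) from by rw [Matrix.transpose_mul, Matrix.mul_assoc]]
  have step3 : ∀ j, ((G*V)ᵀ*U) j j ≤ 1 := by
    intro j
    have hU1 : ∑ l, (U l j)^2 = 1 := by rw [← col_sq_sum, hU, Matrix.one_apply_eq]
    have hGV : ∑ l, ((G*V) l j)^2 ≤ 1 := by
      rw [← col_sq_sum]
      have h6 : (G*V)ᵀ*(G*V) = Vᵀ*(Gᵀ*G)*V := by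
        rw [Matrix.transpose_mul]; simp only [Matrix.mul_assoc]
      have h7 : Vᵀ*(W * Matrix.diagonal (fun i => ι i * (ν i * ι i)) * Wᵀ)*V
          = (Wᵀ*V)ᵀ * Matrix.diagonal (fun i => ι i * (ν i * ι i)) * (Wᵀ*V) := by
        rw [Matrix.transpose_mul, Matrix.transpose_transpose]; simp only [Matrix.mul_assoc]
      rw [h6, hGG, h7, diag_quad]
      have h8 : ∑ i, ((Wᵀ*V) i j)^2 = 1 := by
        have h9 : (Wᵀ*V)ᵀ*(Wᵀ*V) = Vᵀ*V := by
          rw [Matrix.transpose_mul, Matrix.transpose_transpose, Matrix.mul_assoc,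
            mul_cancel_assoc hW2]
        rw [← col_sq_sum, h9, hV, Matrix.one_apply_eq]
      calc ∑ i, (ι i * (ν i * ι i)) * ((Wᵀ*V) i j)^2
          ≤ ∑ i, 1 * ((Wᵀ*V) i j)^2 := by
            apply Finset.sum_le_sum
            intro i _
            exact mul_le_mul_of_nonneg_right (hχ1 i) (sq_nonneg _)
        _ = 1 := by simp only [one_mul]; exact h8
    have hentry : ((G*V)ᵀ*U) j j = ∑ l, (G*V) l j * U l j := by
      rw [Matrix.mul_apply]
      apply Finset.sum_congr rfl
      intro l _
      rw [Matrix.transpose_apply]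
    rw [hentry]
    have s1 : Real.sqrt (∑ l, ((G*V) l j)^2) ≤ 1 := by
      calc Real.sqrt (∑ l, ((G*V) l j)^2) ≤ Real.sqrt 1 := Real.sqrt_le_sqrt hGV
        _ = 1 := Real.sqrt_one
    calc ∑ l, (G*V) l j * U l j
        ≤ Real.sqrt (∑ l, ((G*V) l j)^2) * Real.sqrt (∑ l, (U l j)^2) :=
          sum_mul_le_sqrt_mul_sqrt _ _
      _ = Real.sqrt (∑ l, ((G*V) l j)^2) := by rw [hU1, Real.sqrt_one, mul_one]
      _ ≤ 1 := s1
  have hnuc : nuclearNorm Z0 = ∑ i, Real.sqrt (ν i) := rfl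
  rw [hnuc, ← step1, step2]
  apply Finset.sum_le_sum
  intro j _
  calc e j * (((G*V)ᵀ*U) j j) ≤ e j * 1 := mul_le_mul_of_nonneg_left (step3 j) (he0 j)
    _ = e j := mul_one _

lemma scalar_EY {p r : ℕ} {e q : Fin p → ℝ} (he0 : ∀ i, 0 ≤ e i) (hea : Antitone e)
    (hq0 : ∀ i, 0 ≤ q i) (hq1 : ∀ i, q i ≤ 1) (hsum : ∑ i, (1 - q i) ≤ (r:ℝ)) :
    ∑ i ∈ Finset.univ.filter (fun i : Fin p => ¬ (i:ℕ) < r), e i ^ 2 ≤ ∑ i, e i ^ 2 * q i := by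
  by_cases hrp : p ≤ r
  · have hempty : Finset.univ.filter (fun i : Fin p => ¬ (i:ℕ) < r) = ∅ := by
      apply Finset.filter_false_of_mem
      intro i _
      simp only [not_not]
      exact lt_of_lt_of_le i.isLt hrp
    rw [hempty, Finset.sum_empty]
    exact Finset.sum_nonneg fun i _ => mul_nonneg (sq_nonneg _) (hq0 i)
  · push_neg at hrp
    set ρ : Fin p := ⟨r, hrp⟩ with hρ
    set A := Finset.univ.filter (fun i : Fin p => ¬ (i:ℕ) < r) with hA
    set B := Finset.univ.filter (fun i : Fin p => (i:ℕ) < r) with hB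
    have hBA : ∀ f : Fin p → ℝ, ∑ i ∈ B, f i + ∑ i ∈ A, f i = ∑ i, f i := fun f =>
      Finset.sum_filter_add_sum_filter_not _ _ f
    have hcardB : (B.card : ℝ) = r := by
      have hBI : B = Finset.Iio ρ := by
        ext i
        simp [hB, hρ, Finset.mem_Iio, Fin.lt_def, -Fin.val_fin_lt]
      rw [hBI, Fin.card_Iio]
    have h1 : ∑ i ∈ A, e i ^ 2 * (1 - q i) ≤ e ρ ^ 2 * ∑ i ∈ A, (1 - q i) := by
      rw [Finset.mul_sum]
      apply Finset.sum_le_sum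
      intro i hi
      have hρi : ρ ≤ i := by
        rw [hA, Finset.mem_filter] at hi
        exact Fin.mk_le_of_le_val (le_of_not_gt hi.2)
      have he : e i ≤ e ρ := hea hρi
      have h1q : 0 ≤ 1 - q i := by linarith [hq1 i]
      have hsq : e i ^ 2 ≤ e ρ ^ 2 := pow_le_pow_left₀ (he0 i) he 2
      exact mul_le_mul_of_nonneg_right hsq h1q
    have h2 : ∑ i ∈ A, (1 - q i) ≤ (r:ℝ) - ∑ i ∈ B, (1 - q i) := by
      have := hBA (fun i => 1 - q i)
      linarith
    have h3 : ∑ i ∈ B, (1 - q i) = (r:ℝ) - ∑ i ∈ B, q i := by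
      rw [Finset.sum_sub_distrib, Finset.sum_const, nsmul_eq_mul, mul_one, hcardB]
    have h4 : e ρ ^ 2 * ∑ i ∈ B, q i ≤ ∑ i ∈ B, e i ^ 2 * q i := by
      rw [Finset.mul_sum]
      apply Finset.sum_le_sum
      intro i hi
      have hiρ : i ≤ ρ := by
        rw [hB, Finset.mem_filter] at hi
        exact le_of_lt (by rw [Fin.lt_def]; exact hi.2)
      have he : e ρ ≤ e i := hea hiρ
      have hsq : e ρ ^ 2 ≤ e i ^ 2 := pow_le_pow_left₀ (he0 ρ) he 2
      exact mul_le_mul_of_nonneg_right hsq (hq0 i)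
    have h5 : ∑ i ∈ A, e i ^ 2 * (1 - q i) = ∑ i ∈ A, e i ^ 2 - ∑ i ∈ A, e i ^ 2 * q i := by
      rw [← Finset.sum_sub_distrib]
      apply Finset.sum_congr rfl
      intro i _
      ring
    have h6 : ∑ i, e i ^ 2 * q i = ∑ i ∈ B, e i ^ 2 * q i + ∑ i ∈ A, e i ^ 2 * q i :=
      (hBA _).symm
    have h7 : (0:ℝ) ≤ e ρ ^ 2 := sq_nonneg _
    have h8 : e ρ ^ 2 * ∑ i ∈ A, (1 - q i) ≤ e ρ ^ 2 * ((r:ℝ) - ∑ i ∈ B, (1 - q i)) :=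
      mul_le_mul_of_nonneg_left h2 h7
    have h9 : e ρ ^ 2 * ((r:ℝ) - ∑ i ∈ B, (1 - q i)) = e ρ ^ 2 * ∑ i ∈ B, q i := by
      rw [h3]; ring
    linarith

lemma eckart_young {m n p r : ℕ} {U : Matrix (Fin m) (Fin p) ℝ} {V : Matrix (Fin n) (Fin p) ℝ}
    (hU : Uᵀ * U = 1) (hV : Vᵀ * V = 1) {e : Fin p → ℝ} (he0 : ∀ i, 0 ≤ e i) (hea : Antitone e)
    (Z : Matrix (Fin m) (Fin n) ℝ) (hZr : Z.rank ≤ r) :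
    ∑ i ∈ Finset.univ.filter (fun i : Fin p => ¬ (i:ℕ) < r), e i ^ 2
      ≤ frobSq (U * Matrix.diagonal e * Vᵀ - Z) := by
  obtain ⟨W, hW1, hW2, hWA⟩ := spectral Z
  set μ := (Matrix.isHermitian_conjTranspose_mul_self Z).eigenvalues with hμ
  set χ : Fin n → ℝ := fun i => if μ i = 0 then 1 else 0 with hχ
  set Q := W * Matrix.diagonal χ * Wᵀ with hQ
  have hQt : Qᵀ = Q := by rw [hQ, sandwich_transpose]
  have hχχ : (fun i => χ i * χ i) = χ := by
    funext i
    by_cases h : μ i = 0 <;> simp [hχ, h]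
  have hQi : Q * Q = Q := by
    rw [hQ, sandwich_mul hW1, hχχ]
  have hZQ : Z * Q = 0 := by
    apply eq_zero_of_frobSq_eq_zero
    rw [frobSq_mul_eq_trace Z hQt hQi, hWA, hQ, sandwich_mul hW1, trace_sandwich hW1]
    apply Finset.sum_eq_zero
    intro i _
    by_cases h : μ i = 0 <;> simp [hχ, h]
  set M0 := U * Matrix.diagonal e * Vᵀ with hM0
  have hstep1 : frobSq (M0 * Q) ≤ frobSq (M0 - Z) := by
    have hmq : (M0 - Z) * Q = M0 * Q := by rw [Matrix.sub_mul, hZQ, sub_zero]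
    calc frobSq (M0 * Q) = frobSq ((M0 - Z) * Q) := by rw [hmq]
      _ ≤ frobSq (M0 - Z) := frobSq_mul_proj_le _ hQt hQi
  set q : Fin p → ℝ := fun i => (Vᵀ * Q * V) i i with hq
  have hstep2 : frobSq (M0 * Q) = ∑ i, e i ^ 2 * q i := by
    rw [frobSq_mul_eq_trace M0 hQt hQi,
      show M0ᵀ * M0 = V * Matrix.diagonal (fun i => e i * e i) * Vᵀ from by
        rw [hM0]; exact gram_eq hU e e,
      Matrix.mul_assoc, Matrix.trace_mul_comm, ← Matrix.mul_assoc, Matrix.trace_mul_comm,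
      trace_diagonal_mul]
    apply Finset.sum_congr rfl
    intro i _
    rw [hq]
    ring
  have hq0 : ∀ i, 0 ≤ q i := fun i => diag_proj_conj_nonneg hQt hQi V i
  set S : Matrix (Fin n) (Fin n) ℝ := 1 - Q with hS
  have hSt : Sᵀ = S := compl_proj_transpose hQt
  have hSi : S * S = S := compl_proj_idem hQi
  have hvv : ∀ i, (Vᵀ * S * V) i i = 1 - q i := by
    intro i
    rw [show Vᵀ * S * V = Vᵀ * V - Vᵀ * Q * V from by
      rw [hS, Matrix.mul_sub, Matrix.mul_one, Matrix.sub_mul], hV, Matrix.sub_apply,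
      Matrix.one_apply_eq]
  have hq1 : ∀ i, q i ≤ 1 := by
    intro i
    have h0 := diag_proj_conj_nonneg hSt hSi V i
    rw [hvv i] at h0
    linarith
  have hsumq : ∑ i, (1 - q i) ≤ (r:ℝ) := by
    have e0 : ∑ i, (1 - q i) = Matrix.trace (Vᵀ * S * V) := by
      have ht : Matrix.trace (Vᵀ * S * V) = ∑ i, (Vᵀ * S * V) i i := rfl
      rw [ht]
      exact Finset.sum_congr rfl fun i _ => (hvv i).symm
    have e1 : Vᵀ * S * V = (S * V)ᵀ * (S * V) := conj_proj_eq hSt hSi V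
    have e2 : Matrix.trace (Vᵀ * S * V) = frobSq (S * V) := by
      rw [e1, ← frobSq_eq_trace]
    have e3 : frobSq (S * V) ≤ frobSq S := frobSq_mul_ortho_le hV _
    have e4 : frobSq S = Matrix.trace S := by
      rw [frobSq_eq_trace, hSt, hSi]
    have e5 : Matrix.trace S = (n:ℝ) - ∑ i, χ i := by
      rw [hS, Matrix.trace_sub, Matrix.trace_one, hQ, trace_sandwich hW1]
      simp [Fintype.card_fin]
    have e6 : ∑ i, χ i = ((Finset.univ.filter (fun i : Fin n => μ i = 0)).card : ℝ) := by
      rw [hχ, Finset.sum_boole]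
    have e7 : (Finset.univ.filter (fun i : Fin n => μ i = 0)).card
        + (Finset.univ.filter (fun i : Fin n => ¬ μ i = 0)).card = n := by
      rw [Finset.card_filter_add_card_filter_not, Finset.card_univ, Fintype.card_fin]
    have e8 : (Finset.univ.filter (fun i : Fin n => ¬ μ i = 0)).card ≤ r := by
      have h9 : (Zᴴ * Z).rank = Fintype.card {i // μ i ≠ 0} :=
        (Matrix.isHermitian_conjTranspose_mul_self Z).rank_eq_card_non_zero_eigs
      have h10 : (Zᴴ * Z).rank ≤ Z.rank := Matrix.rank_mul_le_right _ _
      have h11 : Fintype.card {i // μ i ≠ 0}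
          = (Finset.univ.filter (fun i : Fin n => ¬ μ i = 0)).card := Fintype.card_subtype _
      rw [← h11, ← h9]
      exact le_trans h10 hZr
    have e9 : ((Finset.univ.filter (fun i : Fin n => μ i = 0)).card : ℝ)
        + ((Finset.univ.filter (fun i : Fin n => ¬ μ i = 0)).card : ℝ) = (n:ℝ) := by
      exact_mod_cast e7
    have e10 : ((Finset.univ.filter (fun i : Fin n => ¬ μ i = 0)).card : ℝ) ≤ (r:ℝ) := by
      exact_mod_cast e8
    calc ∑ i, (1 - q i) = Matrix.trace (Vᵀ * S * V) := e0
      _ = frobSq (S * V) := e2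
      _ ≤ frobSq S := e3
      _ = (n:ℝ) - ∑ i, χ i := by rw [e4, e5]
      _ ≤ (r:ℝ) := by rw [e6]; linarith
  exact le_trans (scalar_EY he0 hea hq0 hq1 hsumq) (hstep2 ▸ hstep1)

end SoftSVD

open SoftSVD

theorem rank_restricted_soft_svd {m n r : ℕ} (hr0 : 0 < r) (hr : r ≤ min m n)
    (X : Matrix (Fin m) (Fin n) ℝ) (lam : ℝ) (hlam : 0 ≤ lam)
    (U : Matrix (Fin m) (Fin (min m n)) ℝ) (σ : Fin (min m n) → ℝ)
    (V : Matrix (Fin n) (Fin (min m n)) ℝ)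
    (hSVD : IsThinSVD X U σ V) :
    -- the rank-r truncated pieces of the SVD
    let Ur : Matrix (Fin m) (Fin r) ℝ := U.submatrix id (Fin.castLE hr)
    let Vr : Matrix (Fin n) (Fin r) ℝ := V.submatrix id (Fin.castLE hr)
    -- Ẑ = U_r S_λ(D_r) V_rᵀ
    let Zhat : Matrix (Fin m) (Fin n) ℝ :=
      Ur * Matrix.diagonal (fun i : Fin r => max (σ (Fin.castLE hr i) - lam) 0) * Vrᵀ
    Zhat.rank ≤ r ∧
      ∀ Z : Matrix (Fin m) (Fin n) ℝ, Z.rank ≤ r →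
        (1 / 2) * frobSq (X - Zhat) + lam * nuclearNorm Zhat ≤
          (1 / 2) * frobSq (X - Z) + lam * nuclearNorm Z := by
  obtain ⟨hx, hU, hV, hσ0, hσa⟩ := hSVD
  intro Ur Vr Zhat
  set c : Fin (min m n) → ℝ := fun i => min (σ i) lam with hc
  set d : Fin (min m n) → ℝ := fun i => max (σ i - lam) 0 with hd
  set d' : Fin (min m n) → ℝ := fun i => if (i:ℕ) < r then d i else 0 with hd'
  have hcd : ∀ i, c i + d i = σ i := by
    intro i
    rcases le_total (σ i) lam with h | h
    · simp only [hc, hd]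
      rw [min_eq_left h, max_eq_right (by linarith)]
      ring
    · simp only [hc, hd]
      rw [min_eq_right h, max_eq_left (by linarith)]
      ring
  have hc0 : ∀ i, 0 ≤ c i := fun i => le_min (hσ0 i) hlam
  have hcl : ∀ i, c i ≤ lam := fun i => min_le_right _ _
  have hd0 : ∀ i, 0 ≤ d i := fun i => le_max_right _ _
  have hda : Antitone d := fun i j hij => max_le_max (by linarith [hσa hij]) le_rfl
  have hd'0 : ∀ i, 0 ≤ d' i := by
    intro i
    simp only [hd']
    by_cases h : (i:ℕ) < r
    · rw [if_pos h]; exact hd0 i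
    · rw [if_neg h]
  have hress : ∀ (f : Fin (min m n) → ℝ), (∀ z : Fin (min m n), ¬ (z:ℕ) < r → f z = 0) →
      ∑ z, f z = ∑ y : Fin r, f (Fin.castLE hr y) := by
    intro f hf
    have h1 : ∑ y : Fin r, f (Fin.castLE hr y)
        = ∑ z ∈ Finset.univ.map (Fin.castLEEmb hr), f z := by
      rw [Finset.sum_map]
      apply Finset.sum_congr rfl
      intro y _
      congr 1
    rw [h1]
    apply (Finset.sum_subset (Finset.subset_univ _) _).symm
    intro z _ hz
    apply hf
    intro hlt
    apply hz
    rw [Finset.mem_map]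
    refine ⟨⟨(z:ℕ), hlt⟩, Finset.mem_univ _, ?_⟩
    ext
    simp
  have hZhat : Zhat = U * Matrix.diagonal d' * Vᵀ := by
    have h0 : Zhat = Ur * Matrix.diagonal
        (fun i : Fin r => max (σ (Fin.castLE hr i) - lam) 0) * Vrᵀ := rfl
    rw [h0]
    ext a b
    rw [Matrix.mul_apply, Matrix.mul_apply]
    simp only [Matrix.mul_diagonal, Matrix.transpose_apply, Matrix.submatrix_apply, id_eq]
    rw [hress (fun z => U a z * d' z * V b z) (by
      intro z hzr
      simp only [hd', if_neg hzr]
      ring)]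
    apply Finset.sum_congr rfl
    intro y _
    have hy : ((Fin.castLE hr y : Fin (min m n)) : ℕ) < r := by
      simp only [Fin.coe_castLE]
      exact y.isLt
    simp only [hd', hd, if_pos hy]
    rfl
  have hdiagsub : ∀ (f g : Fin (min m n) → ℝ),
      Matrix.diagonal (fun i => f i - g i) = Matrix.diagonal f - Matrix.diagonal g := by
    intro f g
    ext i j
    by_cases h : i = j <;> simp [Matrix.diagonal_apply, h]
  have hXZ : X - Zhat = U * Matrix.diagonal (fun i => σ i - d' i) * Vᵀ := by
    rw [hx, hZhat, hdiagsub, Matrix.mul_sub, Matrix.sub_mul]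
  set Y := U * Matrix.diagonal c * Vᵀ with hY
  have hM : X - Y = U * Matrix.diagonal d * Vᵀ := by
    have hdd : d = fun i => σ i - c i := by
      funext i
      linarith [hcd i]
    rw [hx, hY, hdd, hdiagsub, Matrix.mul_sub, Matrix.sub_mul]
  constructor
  · have h0 : Zhat = Ur * Matrix.diagonal
        (fun i : Fin r => max (σ (Fin.castLE hr i) - lam) 0) * Vrᵀ := rfl
    rw [h0]
    calc (Ur * Matrix.diagonal (fun i : Fin r => max (σ (Fin.castLE hr i) - lam) 0) * Vrᵀ).rank
        ≤ (Ur * Matrix.diagonal (fun i : Fin r => max (σ (Fin.castLE hr i) - lam) 0)).rank :=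
          Matrix.rank_mul_le_left _ _
      _ ≤ Fintype.card (Fin r) := Matrix.rank_le_card_width _
      _ = r := Fintype.card_fin r
  · intro Z hZr
    have hAbd : Matrix.trace (Yᵀ * Z) ≤ lam * nuclearNorm Z :=
      dual_bound hU hV hlam hc0 hcl Z
    have hEY := eckart_young hU hV hd0 hda Z hZr
    rw [← hM] at hEY
    have halg : (1/2) * frobSq (X - Z) + Matrix.trace (Yᵀ * Z)
        = (1/2) * frobSq ((X - Y) - Z) + Matrix.trace (Yᵀ * X) - (1/2) * frobSq Y := by
      have h1 := frobSq_sub X Z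
      have h2 := frobSq_sub (X - Y) Z
      have h3 := frobSq_sub X Y
      have h4 : Matrix.trace ((X - Y)ᵀ * Z)
          = Matrix.trace (Xᵀ * Z) - Matrix.trace (Yᵀ * Z) := by
        rw [Matrix.transpose_sub, Matrix.sub_mul, Matrix.trace_sub]
      have h5 : Matrix.trace (Yᵀ * X) = Matrix.trace (Xᵀ * Y) := trace_transpose_mul_comm Y X
      linarith
    have hYX : Matrix.trace (Yᵀ * X) = ∑ i, c i * σ i := by
      rw [hY, hx]
      exact trace_UDVt_mul hU hV c σ
    have hYYf : frobSq Y = ∑ i, c i * c i := by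
      rw [hY]
      exact frobSq_UDVt hU hV c
    have hXZh : frobSq (X - Zhat) = ∑ i, (σ i - d' i) * (σ i - d' i) := by
      rw [hXZ]
      exact frobSq_UDVt hU hV _
    have hnuc : nuclearNorm Zhat ≤ ∑ i, d' i := by
      rw [hZhat]
      exact nuclearNorm_le_sum hU hV hd'0
    have hnuc' : lam * nuclearNorm Zhat ≤ lam * ∑ i, d' i :=
      mul_le_mul_of_nonneg_left hnuc hlam
    have hper : ∀ i, (1/2) * ((σ i - d' i) * (σ i - d' i)) + lam * d' i
        = (1/2) * (if ¬ (i:ℕ) < r then d i ^ 2 else 0) + (c i * σ i - (1/2) * (c i * c i)) := by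
      intro i
      by_cases hir : (i:ℕ) < r
      · simp only [hd', if_pos hir, if_neg (not_not_intro hir)]
        rcases le_total (σ i) lam with h | h
        · have hci : c i = σ i := by simp only [hc]; exact min_eq_left h
          have hdi : d i = 0 := by simp only [hd]; exact max_eq_right (by linarith)
          rw [hci, hdi]
          ring
        · have hci : c i = lam := by simp only [hc]; exact min_eq_right h
          have hdi : d i = σ i - lam := by simp only [hd]; exact max_eq_left (by linarith)
          rw [hci, hdi]
          ring
      · simp only [hd', if_neg hir, if_pos hir]
        rcases le_total (σ i) lam with h | h
        · have hci : c i = σ i := by simp only [hc]; exact min_eq_left h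
          have hdi : d i = 0 := by simp only [hd]; exact max_eq_right (by linarith)
          rw [hci, hdi]
          ring
        · have hci : c i = lam := by simp only [hc]; exact min_eq_right h
          have hdi : d i = σ i - lam := by simp only [hd]; exact max_eq_left (by linarith)
          rw [hci, hdi]
          ring
    have hsum1 : (1/2) * (∑ i, (σ i - d' i) * (σ i - d' i)) + lam * (∑ i, d' i)
        = ∑ i, ((1/2) * ((σ i - d' i) * (σ i - d' i)) + lam * d' i) := by
      rw [Finset.mul_sum, Finset.mul_sum, ← Finset.sum_add_distrib]
    have hsum2 : ∑ i : Fin (min m n), ((1/2) * (if ¬ (i:ℕ) < r then d i ^ 2 else 0)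
          + (c i * σ i - (1/2) * (c i * c i)))
        = (1/2) * (∑ i ∈ Finset.univ.filter (fun i : Fin (min m n) => ¬ (i:ℕ) < r), d i ^ 2)
          + ((∑ i, c i * σ i) - (1/2) * (∑ i, c i * c i)) := by
      rw [Finset.sum_add_distrib, Finset.sum_sub_distrib, ← Finset.mul_sum, ← Finset.mul_sum,
        Finset.sum_filter]
    have hscal : (1/2) * (∑ i, (σ i - d' i) * (σ i - d' i)) + lam * (∑ i, d' i)
        = (1/2) * (∑ i ∈ Finset.univ.filter (fun i : Fin (min m n) => ¬ (i:ℕ) < r), d i ^ 2)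
          + ((∑ i, c i * σ i) - (1/2) * (∑ i, c i * c i)) := by
      rw [hsum1, ← hsum2]
      exact Finset.sum_congr rfl fun i _ => hper i
    linarith [hAbd, hEY, halg, hYX, hYYf, hXZh, hnuc', hscal]

end
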